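/- Let (x_k) be iterates of the randomized Kaczmarz method with mismatched adjoint applied to the perturbed right-hand side b + r, where A x̂ = b is consistent. With M = I − VᵀDA, the expectation satisfies E(x_k − x̂) = M^k (x_0 − x̂) + Σ_{l=0}^{k−1} M^l VᵀD r. -/

import Mathlib

open Matrix Finset

/-- Iterates of the randomized Kaczmarz method with mismatched adjoint along a given
sequence of chosen row indices `ω`, applied with right-hand side `c`. -/
noncomputable def rkmaIter {m n : ℕ} (A V : Matrix (Fin m) (Fin n) ℝ) (c : Fin m → ℝ)
    (x0 : Fin n → ℝ) : (k : ℕ) → (Fin k → Fin m) → (Fin n → ℝ)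
  | 0, _ => x0
  | k + 1, ω =>
      let x := rkmaIter A V c x0 k (fun j => ω j.castSucc)
      let i := ω (Fin.last k)
      x - ((A i ⬝ᵥ x - c i) / (A i ⬝ᵥ V i)) • V i

lemma rkma_transpose_mulVec {m n : ℕ} (V : Matrix (Fin m) (Fin n) ℝ) (w : Fin m → ℝ) :
    Vᵀ.mulVec w = ∑ i, w i • V i := by
  funext s
  simp [Matrix.mulVec, dotProduct, Matrix.transpose_apply, Finset.sum_apply, mul_comm]

lemma rkma_inner {m n : ℕ} (A V : Matrix (Fin m) (Fin n) ℝ)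
    (p : Fin m → ℝ) (hps : ∑ i, p i = 1)
    (hav : ∀ i, 0 < A i ⬝ᵥ V i) (r : Fin m → ℝ)
    (D : Matrix (Fin m) (Fin m) ℝ)
    (hD : D = Matrix.diagonal (fun i => p i / (A i ⬝ᵥ V i)))
    (M : Matrix (Fin n) (Fin n) ℝ) (hMdef : M = 1 - Vᵀ * D * A)
    (y : Fin n → ℝ) :
    ∑ i, p i • (y - ((A i ⬝ᵥ y - r i) / (A i ⬝ᵥ V i)) • V i)
      = M.mulVec y + (Vᵀ * D).mulVec r := by
  have hc : ∀ i, (A i ⬝ᵥ V i) ≠ 0 := fun i => (hav i).ne'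
  have hDv : ∀ w : Fin m → ℝ,
      D.mulVec w = fun i => (p i / (A i ⬝ᵥ V i)) * w i := by
    intro w; funext i; rw [hD]; exact Matrix.mulVec_diagonal _ _ _
  have hDA : (Vᵀ * D * A).mulVec y
      = ∑ i, ((p i / (A i ⬝ᵥ V i)) * (A i ⬝ᵥ y)) • V i := by
    rw [← Matrix.mulVec_mulVec, ← Matrix.mulVec_mulVec, hDv, rkma_transpose_mulVec]
    rfl
  have hDr : (Vᵀ * D).mulVec r
      = ∑ i, ((p i / (A i ⬝ᵥ V i)) * r i) • V i := by
    rw [← Matrix.mulVec_mulVec, hDv, rkma_transpose_mulVec]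
  have hterm : ∀ i : Fin m,
      p i • (y - ((A i ⬝ᵥ y - r i) / (A i ⬝ᵥ V i)) • V i)
        = p i • y - ((p i / (A i ⬝ᵥ V i)) * (A i ⬝ᵥ y)) • V i
            + ((p i / (A i ⬝ᵥ V i)) * r i) • V i := by
    intro i
    rw [smul_sub, smul_smul]
    have : p i * ((A i ⬝ᵥ y - r i) / (A i ⬝ᵥ V i))
        = (p i / (A i ⬝ᵥ V i)) * (A i ⬝ᵥ y) - (p i / (A i ⬝ᵥ V i)) * r i := by
      field_simp
    rw [this, sub_smul]
    abel
  rw [Finset.sum_congr rfl fun i _ => hterm i]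
  rw [Finset.sum_add_distrib, Finset.sum_sub_distrib, ← Finset.sum_smul, hps, one_smul]
  rw [hMdef, Matrix.sub_mulVec, Matrix.one_mulVec, hDA, hDr]

theorem rkma_expectation_noisy {m n : ℕ} (A V : Matrix (Fin m) (Fin n) ℝ)
    (p : Fin m → ℝ) (hp : ∀ i, 0 < p i) (hps : ∑ i, p i = 1)
    (hav : ∀ i, 0 < A i ⬝ᵥ V i)
    (b r : Fin m → ℝ) (xhat : Fin n → ℝ) (hb : A.mulVec xhat = b)
    (x0 : Fin n → ℝ)
    (D : Matrix (Fin m) (Fin m) ℝ)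
    (hD : D = Matrix.diagonal (fun i => p i / (A i ⬝ᵥ V i)))
    (M : Matrix (Fin n) (Fin n) ℝ) (hMdef : M = 1 - Vᵀ * D * A) :
    ∀ k : ℕ,
      ∑ ω : Fin k → Fin m, (∏ j, p (ω j)) • (rkmaIter A V (b + r) x0 k ω - xhat)
        = (M ^ k).mulVec (x0 - xhat)
          + ∑ l ∈ Finset.range k, (M ^ l * (Vᵀ * D)).mulVec r := by
  intro k
  induction k with
  | zero =>
      simp [rkmaIter]
  | succ k ih =>
      rw [← Equiv.sum_comp (Fin.snocEquiv (fun _ => Fin m))]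
      rw [Fintype.sum_prod_type_right]
      have hstep : ∀ (ω : Fin k → Fin m) (i : Fin m),
          rkmaIter A V (b + r) x0 (k + 1) (Fin.snocEquiv (fun _ => Fin m) (i, ω))
            = (rkmaIter A V (b + r) x0 k ω)
              - ((A i ⬝ᵥ rkmaIter A V (b + r) x0 k ω - (b + r) i) / (A i ⬝ᵥ V i)) • V i := by
        intro ω i
        have hωc : (fun j : Fin k => Fin.snocEquiv (fun _ => Fin m) (i, ω) j.castSucc) = ω := by
          funext j; simp [Fin.snocEquiv]
        have hl : Fin.snocEquiv (fun _ => Fin m) (i, ω) (Fin.last k) = i := by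
          simp [Fin.snocEquiv]
        simp only [rkmaIter, hωc, hl]
      have hprod : ∀ (ω : Fin k → Fin m) (i : Fin m),
          (∏ j, p (Fin.snocEquiv (fun _ => Fin m) (i, ω) j))
            = (∏ j, p (ω j)) * p i := by
        intro ω i
        rw [Fin.prod_univ_castSucc]
        simp [Fin.snocEquiv]
      have hkey : ∀ ω : Fin k → Fin m,
          ∑ i, (∏ j, p (Fin.snocEquiv (fun _ => Fin m) (i, ω) j)) •
              (rkmaIter A V (b + r) x0 (k + 1) (Fin.snocEquiv (fun _ => Fin m) (i, ω)) - xhat)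
            = (∏ j, p (ω j)) •
                (M.mulVec (rkmaIter A V (b + r) x0 k ω - xhat) + (Vᵀ * D).mulVec r) := by
        intro ω
        rw [← rkma_inner A V p hps hav r D hD M hMdef
              (rkmaIter A V (b + r) x0 k ω - xhat), Finset.smul_sum]
        refine Finset.sum_congr rfl fun i _ => ?_
        rw [hstep, hprod, mul_smul]
        congr 1
        have heq : A i ⬝ᵥ rkmaIter A V (b + r) x0 k ω - (b + r) i
            = A i ⬝ᵥ (rkmaIter A V (b + r) x0 k ω - xhat) - r i := by
          have hbi : A i ⬝ᵥ xhat = b i := congrFun hb i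
          simp [dotProduct_sub, hbi]
          ring
        rw [heq]
        abel
      rw [Finset.sum_congr rfl fun ω _ => hkey ω]
      have hsum1 : ∑ ω : Fin k → Fin m, ∏ j, p (ω j) = 1 := by
        rw [← Fintype.sum_pow p k, hps, one_pow]
      simp only [smul_add, Finset.sum_add_distrib, ← Finset.sum_smul, hsum1, one_smul]
      have hlin : M.mulVec (∑ ω : Fin k → Fin m,
            (∏ j, p (ω j)) • (rkmaIter A V (b + r) x0 k ω - xhat))
          = ∑ ω : Fin k → Fin m, (∏ j, p (ω j)) •
              M.mulVec (rkmaIter A V (b + r) x0 k ω - xhat) := by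
        rw [← Matrix.mulVecLin_apply, map_sum]
        simp only [Matrix.mulVecLin_apply, Matrix.mulVec_smul]
      rw [← hlin, ih, Matrix.mulVec_add]
      have e1 : M.mulVec ((M ^ k).mulVec (x0 - xhat)) = (M ^ (k + 1)).mulVec (x0 - xhat) := by
        rw [Matrix.mulVec_mulVec, ← pow_succ']
      have e2 : M.mulVec (∑ l ∈ Finset.range k, (M ^ l * (Vᵀ * D)).mulVec r)
          = ∑ l ∈ Finset.range k, (M ^ (l + 1) * (Vᵀ * D)).mulVec r := by
        rw [← Matrix.mulVecLin_apply, map_sum]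
        refine Finset.sum_congr rfl fun l _ => ?_
        rw [Matrix.mulVecLin_apply, Matrix.mulVec_mulVec, ← Matrix.mul_assoc, ← pow_succ']
      have e3 : ∑ l ∈ Finset.range (k + 1), (M ^ l * (Vᵀ * D)).mulVec r
          = (∑ l ∈ Finset.range k, (M ^ (l + 1) * (Vᵀ * D)).mulVec r)
            + (M ^ 0 * (Vᵀ * D)).mulVec r :=
        Finset.sum_range_succ' _ _
      rw [e1, e2, e3, pow_zero, Matrix.one_mul]
      abel
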